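/- Let (X, B, μ) be a probability space and S₁, ..., S_{k−1} : X → X commuting invertible measure preserving transformations, with k ≥ 2. Let p ∈ ℝ[x] have degree at least k and irrational leading coefficient. Then for all f₁, ..., f_{k−1} ∈ L^∞(X, μ) and every h ∈ ℕ, lim_{N→∞} (1/N)‖∑_{n=1}^N S₁ⁿf₁ · S₂ⁿf₂ ⋯ S_{k−1}ⁿf_{k−1} · e^{2πi p(n)}‖_{L²} = 0. -/

import Mathlib

open MeasureTheory Filter Finset
open scoped Real
open scoped InnerProductSpace ComplexConjugate

section vdc
variable {E : Type*} [NormedAddCommGroup E] [InnerProductSpace ℂ E]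

lemma shift_sum_bound (u : ℕ → E) (hu : ∀ n, ‖u n‖ ≤ 1) (h N : ℕ) (hN : h ≤ N) :
    ‖∑ n ∈ range N, u n - ∑ n ∈ range N, u (n + h)‖ ≤ 2 * h := by
  have e1 : ∑ n ∈ range N, u (n + h) = ∑ m ∈ Ico h (N + h), u m := by
    rw [Finset.sum_Ico_eq_sum_range]
    simp [add_comm]
  have e2 : ∑ n ∈ range N, u n = (∑ m ∈ Ico 0 h, u m) + ∑ m ∈ Ico h N, u m := by
    rw [Finset.sum_Ico_consecutive u (Nat.zero_le h) hN, Finset.range_eq_Ico]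
  have e3 : ∑ m ∈ Ico h (N + h), u m
      = (∑ m ∈ Ico h N, u m) + ∑ m ∈ Ico N (N + h), u m :=
    (Finset.sum_Ico_consecutive u hN (by omega)).symm
  rw [e1, e2, e3]
  have e4 : (∑ m ∈ Ico 0 h, u m) + (∑ m ∈ Ico h N, u m)
      - ((∑ m ∈ Ico h N, u m) + ∑ m ∈ Ico N (N + h), u m)
      = (∑ m ∈ Ico 0 h, u m) - ∑ m ∈ Ico N (N + h), u m := by abel
  rw [e4]
  have b1 : ‖∑ m ∈ Ico 0 h, u m‖ ≤ h := by
    calc ‖∑ m ∈ Ico 0 h, u m‖ ≤ ∑ m ∈ Ico 0 h, ‖u m‖ := norm_sum_le _ _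
    _ ≤ ∑ m ∈ Ico 0 h, 1 := Finset.sum_le_sum fun i _ => hu i
    _ = h := by simp
  have b2 : ‖∑ m ∈ Ico N (N + h), u m‖ ≤ h := by
    calc ‖∑ m ∈ Ico N (N + h), u m‖ ≤ ∑ m ∈ Ico N (N + h), ‖u m‖ := norm_sum_le _ _
    _ ≤ ∑ m ∈ Ico N (N + h), 1 := Finset.sum_le_sum fun i _ => hu i
    _ = h := by simp
  calc ‖(∑ m ∈ Ico 0 h, u m) - ∑ m ∈ Ico N (N + h), u m‖
      ≤ ‖∑ m ∈ Ico 0 h, u m‖ + ‖∑ m ∈ Ico N (N + h), u m‖ := norm_sub_le _ _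
  _ ≤ 2 * h := by linarith

set_option maxHeartbeats 1000000 in
lemma vdc_core (u : ℕ → E) (hu : ∀ n, ‖u n‖ ≤ 1) (H N : ℕ) (hH : 1 ≤ H) (hHN : H ≤ N) :
    (N : ℝ)⁻¹ * ‖∑ n ∈ range N, u n‖
      ≤ 2 * H / N + Real.sqrt ((H : ℝ)⁻¹
          + (∑ d ∈ Ico 1 H, ‖∑ n ∈ range N, (⟪u (n + d), u n⟫_ℂ)‖) / N + 2 * H / N) := by
  have hN1 : 1 ≤ N := le_trans hH hHN
  have hNpos : (0:ℝ) < N := by exact_mod_cast hN1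
  have hHpos : (0:ℝ) < H := by exact_mod_cast hH
  set Γ : ℝ := ∑ d ∈ Ico 1 H, ‖∑ n ∈ range N, (⟪u (n + d), u n⟫_ℂ)‖ with hΓ
  have hΓ0 : 0 ≤ Γ := Finset.sum_nonneg fun _ _ => norm_nonneg _
  set v : ℕ → E := fun n => ∑ h ∈ range H, u (n + h) with hv
  -- Step A
  have stepA : ‖∑ n ∈ range N, u n - (H : ℝ)⁻¹ • ∑ n ∈ range N, v n‖ ≤ 2 * H := by
    have swap : ∑ n ∈ range N, v n = ∑ h ∈ range H, ∑ n ∈ range N, u (n + h) :=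
      Finset.sum_comm
    have key : ∑ n ∈ range N, u n - (H : ℝ)⁻¹ • ∑ n ∈ range N, v n
        = (H : ℝ)⁻¹ • ∑ h ∈ range H, (∑ n ∈ range N, u n - ∑ n ∈ range N, u (n + h)) := by
      rw [swap, Finset.sum_sub_distrib, smul_sub, Finset.sum_const, card_range,
        ← Nat.cast_smul_eq_nsmul ℝ, smul_smul, inv_mul_cancel₀ hHpos.ne', one_smul]
    rw [key, norm_smul, norm_inv, Real.norm_natCast]
    calc (H:ℝ)⁻¹ * ‖∑ h ∈ range H, (∑ n ∈ range N, u n - ∑ n ∈ range N, u (n + h))‖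
        ≤ (H:ℝ)⁻¹ * ∑ h ∈ range H, ‖∑ n ∈ range N, u n - ∑ n ∈ range N, u (n + h)‖ := by
          gcongr; exact norm_sum_le _ _
      _ ≤ (H:ℝ)⁻¹ * ∑ h ∈ range H, 2 * (H:ℝ) := by
          gcongr with h hh
          calc ‖∑ n ∈ range N, u n - ∑ n ∈ range N, u (n + h)‖ ≤ 2 * h :=
                shift_sum_bound u hu h N (le_trans (le_of_lt (mem_range.1 hh)) hHN)
          _ ≤ 2 * H := by
                have : (h:ℝ) ≤ H := by exact_mod_cast (mem_range.1 hh).le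
                linarith
      _ = 2 * H := by
          rw [Finset.sum_const, card_range, nsmul_eq_mul]
          field_simp
  -- off-diagonal correlation bound
  have hw1 : ∀ d n : ℕ, ‖(⟪u (n + d), u n⟫_ℂ)‖ ≤ 1 := by
    intro d n
    refine le_trans (norm_inner_le_norm _ _) ?_
    nlinarith [hu (n + d), hu n, norm_nonneg (u (n + d)), norm_nonneg (u n)]
  have offd : ∀ a d : ℕ, a < H → d ∈ Ico 1 H →
      ‖∑ n ∈ range N, (⟪u (n + a + d), u (n + a)⟫_ℂ)‖ ≤ Γ + 2 * H := by
    intro a d ha hd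
    have hshift := shift_sum_bound (fun n => (⟪u (n + d), u n⟫_ℂ)) (hw1 d) a N
      (le_trans ha.le hHN)
    have hsingle : ‖∑ n ∈ range N, (⟪u (n + d), u n⟫_ℂ)‖ ≤ Γ :=
      Finset.single_le_sum (f := fun d => ‖∑ n ∈ range N, (⟪u (n + d), u n⟫_ℂ)‖)
        (fun i _ => norm_nonneg _) hd
    have tri : ‖∑ n ∈ range N, (⟪u (n + a + d), u (n + a)⟫_ℂ)‖
        ≤ ‖∑ n ∈ range N, (⟪u (n + d), u n⟫_ℂ)‖
          + ‖∑ n ∈ range N, (⟪u (n + d), u n⟫_ℂ)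
              - ∑ n ∈ range N, (⟪u (n + a + d), u (n + a)⟫_ℂ)‖ := by
      have := norm_le_norm_add_norm_sub' (∑ n ∈ range N, (⟪u (n + a + d), u (n + a)⟫_ℂ))
        (∑ n ∈ range N, (⟪u (n + d), u n⟫_ℂ))
      rw [norm_sub_rev] at this
      exact this
    have haH : (a:ℝ) ≤ H := by exact_mod_cast ha.le
    calc ‖∑ n ∈ range N, (⟪u (n + a + d), u (n + a)⟫_ℂ)‖
        ≤ Γ + 2 * a := by
          exact le_trans tri (add_le_add hsingle hshift)
      _ ≤ Γ + 2 * H := by linarith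
  have Bbd : ∀ h h' : ℕ, h ∈ range H → h' ∈ range H → h ≠ h' →
      ‖∑ n ∈ range N, (⟪u (n + h), u (n + h')⟫_ℂ)‖ ≤ Γ + 2 * H := by
    intro h h' hh hh' hne
    rcases lt_or_gt_of_ne hne with hlt | hgt
    · have key : ∀ n : ℕ, (⟪u (n + h), u (n + h')⟫_ℂ)
          = conj (⟪u (n + h + (h' - h)), u (n + h)⟫_ℂ) := by
        intro n
        have e : n + h + (h' - h) = n + h' := by omega
        rw [e, inner_conj_symm]
      rw [Finset.sum_congr rfl fun n _ => key n, ← map_sum, RCLike.norm_conj]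
      exact offd h (h' - h) (mem_range.1 hh)
        (mem_Ico.2 ⟨by omega, by have := mem_range.1 hh'; omega⟩)
    · have key : ∀ n : ℕ, (⟪u (n + h), u (n + h')⟫_ℂ)
          = (⟪u (n + h' + (h - h')), u (n + h')⟫_ℂ) := by
        intro n
        have e : n + h' + (h - h') = n + h := by omega
        rw [e]
      rw [Finset.sum_congr rfl fun n _ => key n]
      exact offd h' (h - h') (mem_range.1 hh')
        (mem_Ico.2 ⟨by omega, by have := mem_range.1 hh; omega⟩)
  -- step C
  have stepC : ∑ n ∈ range N, ‖v n‖ ^ 2 ≤ (H:ℝ) * ((N:ℝ) + H * (Γ + 2 * H)) := by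
    have expand : ∀ n, (⟪v n, v n⟫_ℂ)
        = ∑ h ∈ range H, ∑ h' ∈ range H, (⟪u (n + h), u (n + h')⟫_ℂ) := by
      intro n
      rw [hv]
      rw [sum_inner]
      exact Finset.sum_congr rfl fun h _ => by rw [inner_sum]
    have e1 : ∑ n ∈ range N, ‖v n‖ ^ 2 ≤ ‖∑ n ∈ range N, (⟪v n, v n⟫_ℂ)‖ := by
      have hcast : ((∑ n ∈ range N, ‖v n‖ ^ 2 : ℝ) : ℂ) = ∑ n ∈ range N, (⟪v n, v n⟫_ℂ) := by
        push_cast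
        exact Finset.sum_congr rfl fun n _ => by
          rw [inner_self_eq_norm_sq_to_K]; norm_cast
      have heq : ∑ n ∈ range N, ‖v n‖ ^ 2 = ‖∑ n ∈ range N, (⟪v n, v n⟫_ℂ)‖ := by
        rw [← hcast, Complex.norm_real, Real.norm_eq_abs, abs_of_nonneg (by positivity)]
      exact le_of_eq heq
    refine le_trans e1 ?_
    have swap2 : ∑ n ∈ range N, (⟪v n, v n⟫_ℂ)
        = ∑ h ∈ range H, ∑ h' ∈ range H, ∑ n ∈ range N, (⟪u (n + h), u (n + h')⟫_ℂ) := by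
      rw [Finset.sum_congr rfl fun n _ => expand n, Finset.sum_comm]
      exact Finset.sum_congr rfl fun h _ => Finset.sum_comm
    rw [swap2]
    calc ‖∑ h ∈ range H, ∑ h' ∈ range H, ∑ n ∈ range N, (⟪u (n + h), u (n + h')⟫_ℂ)‖
        ≤ ∑ h ∈ range H, ‖∑ h' ∈ range H, ∑ n ∈ range N, (⟪u (n + h), u (n + h')⟫_ℂ)‖ :=
          norm_sum_le _ _
      _ ≤ ∑ h ∈ range H, ((N:ℝ) + H * (Γ + 2 * H)) := by
          apply Finset.sum_le_sum
          intro h hh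
          rw [← Finset.add_sum_erase _ _ hh]
          calc ‖(∑ n ∈ range N, (⟪u (n + h), u (n + h)⟫_ℂ))
              + ∑ h' ∈ (range H).erase h, ∑ n ∈ range N, (⟪u (n + h), u (n + h')⟫_ℂ)‖
              ≤ ‖∑ n ∈ range N, (⟪u (n + h), u (n + h)⟫_ℂ)‖
                + ‖∑ h' ∈ (range H).erase h, ∑ n ∈ range N, (⟪u (n + h), u (n + h')⟫_ℂ)‖ :=
                norm_add_le _ _
            _ ≤ (N:ℝ) + H * (Γ + 2 * H) := by
                gcongr
                · calc ‖∑ n ∈ range N, (⟪u (n + h), u (n + h)⟫_ℂ)‖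
                      ≤ ∑ n ∈ range N, ‖(⟪u (n + h), u (n + h)⟫_ℂ)‖ := norm_sum_le _ _
                    _ ≤ ∑ n ∈ range N, 1 := Finset.sum_le_sum fun n _ => by
                        have := hw1 0 (n + h); simpa using this
                    _ = (N:ℝ) := by simp
                · calc ‖∑ h' ∈ (range H).erase h, ∑ n ∈ range N, (⟪u (n + h), u (n + h')⟫_ℂ)‖
                      ≤ ∑ h' ∈ (range H).erase h,
                          ‖∑ n ∈ range N, (⟪u (n + h), u (n + h')⟫_ℂ)‖ := norm_sum_le _ _
                    _ ≤ ∑ h' ∈ (range H).erase h, (Γ + 2 * H) :=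
                        Finset.sum_le_sum fun h' hh' =>
                          Bbd h h' hh (Finset.mem_of_mem_erase hh')
                            (Ne.symm (Finset.ne_of_mem_erase hh'))
                    _ ≤ (H:ℝ) * (Γ + 2 * H) := by
                        rw [Finset.sum_const, nsmul_eq_mul]
                        have hc : ((range H).erase h).card ≤ H :=
                          le_trans Finset.card_erase_le (le_of_eq (card_range H))
                        have hc' : (((range H).erase h).card : ℝ) ≤ (H:ℝ) := by
                          exact_mod_cast hc
                        nlinarith [hΓ0, hHpos]
      _ = (H:ℝ) * ((N:ℝ) + H * (Γ + 2 * H)) := by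
          rw [Finset.sum_const, card_range, nsmul_eq_mul]
  -- step B
  have stepB : ‖∑ n ∈ range N, v n‖ ^ 2 ≤ (N:ℝ) * ∑ n ∈ range N, ‖v n‖ ^ 2 := by
    calc ‖∑ n ∈ range N, v n‖ ^ 2 ≤ (∑ n ∈ range N, ‖v n‖) ^ 2 :=
          pow_le_pow_left₀ (norm_nonneg _) (norm_sum_le _ _) 2
      _ ≤ (range N).card * ∑ n ∈ range N, ‖v n‖ ^ 2 := sq_sum_le_card_mul_sum_sq
      _ = (N:ℝ) * ∑ n ∈ range N, ‖v n‖ ^ 2 := by rw [card_range]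
  -- combine
  set Z : ℝ := (N:ℝ) * ((H:ℝ) * ((N:ℝ) + H * (Γ + 2 * H))) with hZdef
  have hZ0 : 0 ≤ Z := by positivity
  have hvnorm : ‖(H : ℝ)⁻¹ • ∑ n ∈ range N, v n‖ ≤ Real.sqrt Z / H := by
    rw [norm_smul, norm_inv, Real.norm_natCast, inv_mul_eq_div]
    gcongr
    have : ‖∑ n ∈ range N, v n‖ ^ 2 ≤ Z := by
      refine le_trans stepB ?_
      rw [hZdef]
      exact mul_le_mul_of_nonneg_left stepC (by positivity)
    calc ‖∑ n ∈ range N, v n‖ = Real.sqrt (‖∑ n ∈ range N, v n‖ ^ 2) :=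
          (Real.sqrt_sq (norm_nonneg _)).symm
      _ ≤ Real.sqrt Z := Real.sqrt_le_sqrt this
  have main : ‖∑ n ∈ range N, u n‖ ≤ 2 * H + Real.sqrt Z / H := by
    calc ‖∑ n ∈ range N, u n‖
        = ‖(∑ n ∈ range N, u n - (H : ℝ)⁻¹ • ∑ n ∈ range N, v n)
            + (H : ℝ)⁻¹ • ∑ n ∈ range N, v n‖ := by rw [sub_add_cancel]
      _ ≤ ‖∑ n ∈ range N, u n - (H : ℝ)⁻¹ • ∑ n ∈ range N, v n‖
            + ‖(H : ℝ)⁻¹ • ∑ n ∈ range N, v n‖ := norm_add_le _ _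
      _ ≤ 2 * H + Real.sqrt Z / H := add_le_add stepA hvnorm
  have sqrt_step : (N:ℝ)⁻¹ * (Real.sqrt Z / H)
      ≤ Real.sqrt ((H : ℝ)⁻¹ + Γ / N + 2 * H / N) := by
    rw [Real.le_sqrt (by positivity) (by positivity)]
    rw [mul_pow, div_pow, Real.sq_sqrt hZ0, hZdef]
    have heq : ((N:ℝ)⁻¹)^2 * ((N:ℝ) * ((H:ℝ) * ((N:ℝ) + H*(Γ+2*H))) / (H:ℝ)^2)
        = (H : ℝ)⁻¹ + Γ / N + 2 * H / N := by
      field_simp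
      ring
    exact le_of_eq heq
  calc (N:ℝ)⁻¹ * ‖∑ n ∈ range N, u n‖
      ≤ (N:ℝ)⁻¹ * (2 * H + Real.sqrt Z / H) := by gcongr
    _ = 2 * H / N + (N:ℝ)⁻¹ * (Real.sqrt Z / H) := by ring
    _ ≤ 2 * H / N + Real.sqrt ((H : ℝ)⁻¹ + Γ / N + 2 * H / N) :=
        add_le_add le_rfl sqrt_step


lemma vdc (u : ℕ → E) (hu : ∀ n, ‖u n‖ ≤ 1)
    (hcor : ∀ d : ℕ, 1 ≤ d →
      Tendsto (fun N : ℕ => (N : ℝ)⁻¹ * ‖∑ n ∈ range N, (⟪u (n + d), u n⟫_ℂ)‖)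
        atTop (nhds 0)) :
    Tendsto (fun N : ℕ => (N : ℝ)⁻¹ * ‖∑ n ∈ range N, u n‖) atTop (nhds 0) := by
  rw [Metric.tendsto_atTop]
  intro ε hε
  set δ : ℝ := ε / 3 with hδdef
  have hδ : 0 < δ := by positivity
  obtain ⟨H, hH1, hHbig⟩ : ∃ H : ℕ, 1 ≤ H ∧ (H : ℝ)⁻¹ ≤ δ ^ 2 / 4 := by
    obtain ⟨H, hH⟩ := exists_nat_ge (4 / δ ^ 2)
    refine ⟨max H 1, le_max_right _ _, ?_⟩
    have h1 : (4 / δ ^ 2 : ℝ) ≤ (max H 1 : ℕ) := by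
      refine le_trans hH ?_
      exact_mod_cast Nat.le_max_left H 1
    have h2 : (0:ℝ) < (max H 1 : ℕ) := by
      have : (1:ℕ) ≤ max H 1 := le_max_right _ _
      exact_mod_cast this
    rw [inv_le_comm₀ h2 (by positivity)]
    calc (δ ^ 2 / 4)⁻¹ = 4 / δ ^ 2 := by rw [inv_div]
      _ ≤ _ := h1
  have hHpos : (0:ℝ) < H := by exact_mod_cast hH1
  -- eventual bounds
  have ev1 : ∀ᶠ N : ℕ in atTop, ∀ d ∈ Ico 1 H,
      (N : ℝ)⁻¹ * ‖∑ n ∈ range N, (⟪u (n + d), u n⟫_ℂ)‖ ≤ δ ^ 2 / (4 * H) := by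
    rw [Finset.eventually_all]
    intro d hd
    exact (hcor d (mem_Ico.1 hd).1).eventually (eventually_le_nhds (by positivity))
  have ev2 : ∀ᶠ N : ℕ in atTop, 2 * (H:ℝ) / N ≤ δ ^ 2 / 4 := by
    have : Tendsto (fun N : ℕ => 2 * (H:ℝ) / N) atTop (nhds 0) :=
      tendsto_const_div_atTop_nhds_zero_nat _
    exact this.eventually (eventually_le_nhds (by positivity))
  have ev3 : ∀ᶠ N : ℕ in atTop, 2 * (H:ℝ) / N ≤ δ := by
    have : Tendsto (fun N : ℕ => 2 * (H:ℝ) / N) atTop (nhds 0) :=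
      tendsto_const_div_atTop_nhds_zero_nat _
    exact this.eventually (eventually_le_nhds (by positivity))
  have ev4 : ∀ᶠ N : ℕ in atTop, H ≤ N := eventually_ge_atTop H
  obtain ⟨M, hM⟩ := ((ev1.and (ev2.and (ev3.and ev4))).and (eventually_ge_atTop 1)).exists_forall_of_atTop
  refine ⟨M, fun N hN => ?_⟩
  obtain ⟨⟨h1, h2, h3, h4⟩, hN1⟩ := hM N hN
  have hNpos : (0:ℝ) < N := by exact_mod_cast hN1
  have core := vdc_core u hu H N hH1 h4
  set Γ : ℝ := ∑ d ∈ Ico 1 H, ‖∑ n ∈ range N, (⟪u (n + d), u n⟫_ℂ)‖ with hΓdef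
  have hΓN : Γ / N ≤ δ ^ 2 / 4 := by
    have : Γ / N = ∑ d ∈ Ico 1 H, (N : ℝ)⁻¹ * ‖∑ n ∈ range N, (⟪u (n + d), u n⟫_ℂ)‖ := by
      rw [hΓdef, Finset.sum_div]
      exact Finset.sum_congr rfl fun d _ => by rw [div_eq_inv_mul]
    rw [this]
    calc ∑ d ∈ Ico 1 H, (N : ℝ)⁻¹ * ‖∑ n ∈ range N, (⟪u (n + d), u n⟫_ℂ)‖
        ≤ ∑ d ∈ Ico 1 H, δ ^ 2 / (4 * H) := Finset.sum_le_sum h1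
      _ = (((Ico 1 H).card : ℕ) : ℝ) * (δ ^ 2 / (4 * H)) := by
          rw [Finset.sum_const, nsmul_eq_mul]
      _ ≤ δ ^ 2 / 4 := by
          rw [Nat.card_Ico]
          have hcard : ((H - 1 : ℕ) : ℝ) ≤ H := by
            have : H - 1 ≤ H := Nat.sub_le _ _
            exact_mod_cast this
          rw [div_mul_eq_div_div]
          calc ((H - 1 : ℕ) : ℝ) * (δ ^ 2 / 4 / H) ≤ H * (δ ^ 2 / 4 / H) := by gcongr
            _ = δ ^ 2 / 4 := by field_simp
  have hsqrt : Real.sqrt ((H : ℝ)⁻¹ + Γ / N + 2 * H / N) ≤ δ := by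
    have harg : (H : ℝ)⁻¹ + Γ / N + 2 * H / N ≤ δ ^ 2 := by
      nlinarith [hΓN, h2, hHbig, sq_nonneg δ]
    calc Real.sqrt ((H : ℝ)⁻¹ + Γ / N + 2 * H / N) ≤ Real.sqrt (δ ^ 2) :=
          Real.sqrt_le_sqrt harg
      _ = δ := Real.sqrt_sq hδ.le
  have hfinal : (N : ℝ)⁻¹ * ‖∑ n ∈ range N, u n‖ ≤ 2 * δ := by
    calc (N : ℝ)⁻¹ * ‖∑ n ∈ range N, u n‖
        ≤ 2 * H / N + Real.sqrt ((H : ℝ)⁻¹ + Γ / N + 2 * H / N) := core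
      _ ≤ δ + δ := add_le_add h3 hsqrt
      _ = 2 * δ := by ring
  rw [Real.dist_eq, sub_zero, abs_of_nonneg (by positivity)]
  calc (N : ℝ)⁻¹ * ‖∑ n ∈ range N, u n‖ ≤ 2 * δ := hfinal
    _ < ε := by rw [hδdef]; linarith

end vdc

open Polynomial

lemma taylor_coeff_top (q : ℝ[X]) (c : ℝ) :
    (Polynomial.taylor c q).coeff q.natDegree = q.coeff q.natDegree := by
  rw [Polynomial.taylor_coeff]
  have hdeg : (Polynomial.hasseDeriv q.natDegree q).natDegree ≤ 0 := by
    have := Polynomial.natDegree_hasseDeriv_le q q.natDegree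
    omega
  rw [Polynomial.eval_eq_sum_range' (lt_of_le_of_lt hdeg one_pos) c]
  simp [Polynomial.hasseDeriv_coeff]

lemma taylor_coeff_pred (q : ℝ[X]) (c : ℝ) (e : ℕ) (he : q.natDegree = e + 1) :
    (Polynomial.taylor c q).coeff e
      = q.coeff e + (e + 1 : ℝ) * q.coeff (e + 1) * c := by
  rw [Polynomial.taylor_coeff]
  have hdeg : (Polynomial.hasseDeriv e q).natDegree < 2 := by
    have := Polynomial.natDegree_hasseDeriv_le q e
    omega
  rw [Polynomial.eval_eq_sum_range' hdeg c]
  rw [Finset.sum_range_succ, Finset.sum_range_one]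
  simp only [Polynomial.hasseDeriv_coeff, Nat.zero_add, Nat.choose_self, pow_zero, pow_one]
  have h1 : (1 + e).choose e = e + 1 := by
    rw [Nat.add_comm]
    exact Nat.choose_succ_self_right e
  rw [h1]
  push_cast
  ring

lemma delta_poly (q : ℝ[X]) (e : ℕ) (he : q.natDegree = e + 1)
    (hirr : Irrational q.leadingCoeff) (h : ℕ) (hh : 1 ≤ h) :
    (Polynomial.taylor (h : ℝ) q - q).natDegree = e ∧
      Irrational (Polynomial.taylor (h : ℝ) q - q).leadingCoeff := by
  set D := Polynomial.taylor (h : ℝ) q - q with hD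
  have hco : D.coeff e = ((e + 1) * h : ℕ) * q.leadingCoeff := by
    rw [hD, Polynomial.coeff_sub, taylor_coeff_pred q _ e he]
    rw [Polynomial.leadingCoeff, he]
    push_cast
    ring
  have hirr' : Irrational (D.coeff e) := by
    rw [hco, irrational_natCast_mul_iff]
    exact ⟨by positivity, hirr⟩
  have hne : D.coeff e ≠ 0 := hirr'.ne_zero
  have htop : D.coeff q.natDegree = 0 := by
    rw [hD, Polynomial.coeff_sub, taylor_coeff_top, sub_self]
  have hle : D.natDegree ≤ q.natDegree := by
    refine le_trans (Polynomial.natDegree_sub_le _ _) ?_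
    rw [Polynomial.natDegree_taylor, max_self]
  have hne_top : D.natDegree ≠ q.natDegree := by
    intro hcontra
    have : D.leadingCoeff = 0 := by rw [Polynomial.leadingCoeff, hcontra]; exact htop
    rw [Polynomial.leadingCoeff_eq_zero] at this
    rw [this] at hne
    simp at hne
  have hge : e ≤ D.natDegree := Polynomial.le_natDegree_of_ne_zero hne
  have hdeg : D.natDegree = e := by omega
  refine ⟨hdeg, ?_⟩
  rw [Polynomial.leadingCoeff, hdeg]
  exact hirr'

open Polynomial in
lemma exp_ne_one_of_irrational {a : ℝ} (ha : Irrational a) :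
    Complex.exp (2 * Real.pi * Complex.I * a) ≠ 1 := by
  intro hcontra
  rw [Complex.exp_eq_one_iff] at hcontra
  obtain ⟨n, hn⟩ := hcontra
  have h2πI : (2 * Real.pi * Complex.I : ℂ) ≠ 0 := by
    simp [Complex.I_ne_zero, Real.pi_ne_zero, Complex.ofReal_ne_zero]
  have : (a : ℂ) = (n : ℂ) := by
    have hn' : (a : ℂ) * (2 * Real.pi * Complex.I) = (n : ℂ) * (2 * Real.pi * Complex.I) := by
      rw [← hn]; push_cast; ring
    exact mul_right_cancel₀ h2πI hn'
  have : a = (n : ℝ) := by exact_mod_cast this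
  exact (ha.ne_int n) this

open Polynomial in
lemma weyl_aux : ∀ e : ℕ, ∀ q : ℝ[X], q.natDegree = e + 1 → Irrational q.leadingCoeff →
    Tendsto (fun N : ℕ => (N : ℝ)⁻¹ * ‖∑ n ∈ range N,
      Complex.exp (2 * Real.pi * Complex.I * (q.eval (n : ℝ) : ℝ))‖) atTop (nhds 0) := by
  intro e
  induction e with
  | zero =>
    intro q hdeg hirr
    set a : ℝ := q.coeff 1 with ha
    have hirr' : Irrational a := by rwa [Polynomial.leadingCoeff, hdeg] at hirr
    set z : ℂ := Complex.exp (2 * Real.pi * Complex.I * (a : ℝ)) with hz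
    have hz1 : z ≠ 1 := exp_ne_one_of_irrational hirr'
    have hzabs : ‖z‖ = 1 := by
      rw [hz, Complex.norm_exp]
      have : (2 * Real.pi * Complex.I * (a : ℝ)).re = 0 := by simp [Complex.mul_re]
      rw [this, Real.exp_zero]
    have heval : ∀ n : ℕ, Complex.exp (2 * Real.pi * Complex.I * (q.eval (n : ℝ) : ℝ))
        = Complex.exp (2 * Real.pi * Complex.I * (q.coeff 0 : ℝ)) * z ^ n := by
      intro n
      have hq : q.eval (n : ℝ) = q.coeff 0 + a * n := by
        rw [Polynomial.eval_eq_sum_range' (by omega : q.natDegree < 2)]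
        rw [Finset.sum_range_succ, Finset.sum_range_one]
        push_cast
        ring
      rw [hq, hz, ← Complex.exp_nat_mul, ← Complex.exp_add]
      congr 1
      push_cast
      ring
    have hbound : ∀ N : ℕ, ‖∑ n ∈ range N,
        Complex.exp (2 * Real.pi * Complex.I * (q.eval (n : ℝ) : ℝ))‖ ≤ 2 / ‖z - 1‖ := by
      intro N
      rw [Finset.sum_congr rfl fun n _ => heval n, ← Finset.mul_sum]
      rw [norm_mul, geom_sum_eq hz1]
      have habs : ‖Complex.exp (2 * Real.pi * Complex.I * (q.coeff 0 : ℝ))‖ = 1 := by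
        rw [Complex.norm_exp]
        have : (2 * Real.pi * Complex.I * (q.coeff 0 : ℝ)).re = 0 := by simp [Complex.mul_re]
        rw [this, Real.exp_zero]
      rw [habs, one_mul, norm_div]
      gcongr
      calc ‖z ^ N - 1‖ ≤ ‖z ^ N‖ + ‖(1 : ℂ)‖ := norm_sub_le _ _
        _ = 2 := by rw [norm_pow, hzabs, one_pow, norm_one]; norm_num
    have hz1' : (0:ℝ) < ‖z - 1‖ := by
      rw [norm_pos_iff, sub_ne_zero]
      exact hz1
    apply squeeze_zero (fun N => by positivity) (g := fun N : ℕ => (2 / ‖z - 1‖) / N)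
    · intro N
      rcases Nat.eq_zero_or_pos N with h0 | hpos
      · subst h0; simp
      · have : (0:ℝ) < N := by exact_mod_cast hpos
        rw [inv_mul_eq_div]
        gcongr
        exact hbound N
    · exact tendsto_const_div_atTop_nhds_zero_nat _
  | succ m ih =>
    intro q hdeg hirr
    apply vdc (fun n => Complex.exp (2 * Real.pi * Complex.I * (q.eval (n : ℝ) : ℝ)))
    · intro n
      rw [Complex.norm_exp]
      have : (2 * Real.pi * Complex.I * (q.eval (n:ℝ) : ℝ)).re = 0 := by simp [Complex.mul_re]
      rw [this, Real.exp_zero]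
    · intro d hd
      obtain ⟨hDdeg, hDirr⟩ := delta_poly q (m + 1) hdeg hirr d hd
      set D : ℝ[X] := q - Polynomial.taylor (d : ℝ) q with hDdef
      have hDdeg' : D.natDegree = m + 1 := by
        rw [hDdef, ← neg_sub, natDegree_neg]
        exact hDdeg
      have hDirr' : Irrational D.leadingCoeff := by
        rw [hDdef, ← neg_sub, leadingCoeff_neg]
        exact hDirr.neg
      have key : ∀ n : ℕ,
          (⟪Complex.exp (2 * Real.pi * Complex.I * (q.eval ((n + d : ℕ) : ℝ) : ℝ)),
            Complex.exp (2 * Real.pi * Complex.I * (q.eval (n : ℝ) : ℝ))⟫_ℂ)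
          = Complex.exp (2 * Real.pi * Complex.I * (D.eval (n : ℝ) : ℝ)) := by
        intro n
        rw [RCLike.inner_apply]
        rw [← Complex.exp_conj]
        rw [← Complex.exp_add]
        congr 1
        have hDeval : D.eval (n : ℝ) = q.eval (n : ℝ) - q.eval ((n : ℝ) + d) := by
          rw [hDdef, Polynomial.eval_sub, Polynomial.taylor_eval]
        have hcast : ((n + d : ℕ) : ℝ) = (n : ℝ) + d := by push_cast; ring
        rw [hcast, hDeval]
        simp only [map_mul, Complex.conj_I, Complex.conj_ofReal, map_ofNat]
        push_cast
        ring
      have := ih D hDdeg' hDirr'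
      simpa only [fun n => key n] using
        (by exact this : Tendsto (fun N : ℕ => (N : ℝ)⁻¹ * ‖∑ n ∈ range N,
          Complex.exp (2 * Real.pi * Complex.I * (D.eval (n : ℝ) : ℝ))‖) atTop (nhds 0))

open MeasureTheory

lemma exp_poly_norm_one (r : ℝ) : ‖Complex.exp (2 * Real.pi * Complex.I * (r : ℝ))‖ = 1 := by
  rw [Complex.norm_exp]
  have : (2 * Real.pi * Complex.I * (r : ℝ)).re = 0 := by simp [Complex.mul_re]
  rw [this, Real.exp_zero]

lemma Lp_coeFn_sum {X : Type*} [MeasurableSpace X] {μ : Measure X} {ι : Type*}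
    (s : Finset ι) (v : ι → Lp ℂ 2 μ) :
    ⇑(∑ i ∈ s, v i) =ᵐ[μ] fun x => ∑ i ∈ s, (v i : X → ℂ) x := by
  induction s using Finset.cons_induction with
  | empty =>
    simp only [Finset.sum_empty]
    filter_upwards [Lp.coeFn_zero ℂ 2 μ] with x hx
    simpa using hx
  | cons i s hi ihs =>
    rw [Finset.sum_cons]
    filter_upwards [Lp.coeFn_add (v i) (∑ j ∈ s, v j), ihs] with x h1 h2
    rw [Finset.sum_cons, h1, Pi.add_apply, h2]

open Polynomial in
lemma normAvg {X : Type*} [MeasurableSpace X] (μ : Measure X) [IsProbabilityMeasure μ] :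
    ∀ m : ℕ, ∀ S : Fin m → X ≃ᵐ X, (∀ i, MeasurePreserving (S i) μ μ) →
    (∀ i j, ⇑(S i) ∘ ⇑(S j) = ⇑(S j) ∘ ⇑(S i)) →
    ∀ q : ℝ[X], m + 1 ≤ q.natDegree → Irrational q.leadingCoeff →
    ∀ f : Fin m → X → ℂ, (∀ i, Measurable (f i)) → (∀ i x, ‖f i x‖ ≤ 1) →
    Tendsto (fun N : ℕ => (eLpNorm (fun x => (N : ℝ)⁻¹ • ∑ n ∈ range N,
        ((∏ i, f i ((⇑(S i))^[n] x)) *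
          Complex.exp (2 * Real.pi * Complex.I * (q.eval (n : ℝ) : ℝ)))) 2 μ).toReal)
      atTop (nhds 0) := by
  intro m
  induction m with
  | zero =>
    intro S hS hcomm q hdeg hirr f hmeas hbdd
    have hμ : μ ≠ 0 := IsProbabilityMeasure.ne_zero μ
    have hconst : ∀ N : ℕ, (eLpNorm (fun _x : X => (N : ℝ)⁻¹ • ∑ n ∈ range N,
        ((∏ i : Fin 0, f i ((⇑(S i))^[n] _x)) *
          Complex.exp (2 * Real.pi * Complex.I * (q.eval (n : ℝ) : ℝ)))) 2 μ).toReal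
        = (N : ℝ)⁻¹ * ‖∑ n ∈ range N,
            Complex.exp (2 * Real.pi * Complex.I * (q.eval (n : ℝ) : ℝ))‖ := by
      intro N
      have hprod : ∀ n (x : X), (∏ i : Fin 0, f i ((⇑(S i))^[n] x)) = 1 := by
        intro n x; simp
      simp only [hprod, one_mul]
      rw [eLpNorm_const _ (by norm_num) hμ]
      simp only [measure_univ, ENNReal.one_rpow, mul_one]
      rw [toReal_enorm]
      rw [norm_smul, norm_inv, Real.norm_natCast]
    rw [show (fun N : ℕ => (eLpNorm (fun x => (N : ℝ)⁻¹ • ∑ n ∈ range N,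
        ((∏ i : Fin 0, f i ((⇑(S i))^[n] x)) *
          Complex.exp (2 * Real.pi * Complex.I * (q.eval (n : ℝ) : ℝ)))) 2 μ).toReal)
      = (fun N : ℕ => (N : ℝ)⁻¹ * ‖∑ n ∈ range N,
          Complex.exp (2 * Real.pi * Complex.I * (q.eval (n : ℝ) : ℝ))‖) from funext hconst]
    exact weyl_aux (q.natDegree - 1) q (by omega) hirr
  | succ m ih =>
    intro S hS hcomm q hdeg hirr f hmeas hbdd
    have hSm : ∀ (i : Fin (m+1)) (n : ℕ), Measurable ((⇑(S i))^[n]) :=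
      fun i n => (S i).measurable.iterate n
    set a : ℕ → X → ℂ := fun n x => (∏ i, f i ((⇑(S i))^[n] x)) *
      Complex.exp (2 * Real.pi * Complex.I * (q.eval (n : ℝ) : ℝ)) with ha
    have hameas : ∀ n, Measurable (a n) := by
      intro n
      apply Measurable.mul_const
      exact Finset.measurable_prod _ fun i _ => (hmeas i).comp (hSm i n)
    have habd : ∀ n x, ‖a n x‖ ≤ 1 := by
      intro n x
      rw [ha]
      simp only [norm_mul, exp_poly_norm_one, mul_one, norm_prod]
      exact Finset.prod_le_one (fun i _ => norm_nonneg _) (fun i _ => hbdd i _)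
    have haℒp : ∀ n, MemLp (a n) 2 μ := fun n =>
      MemLp.of_bound (hameas n).aestronglyMeasurable 1 (Filter.Eventually.of_forall (habd n))
    set u : ℕ → Lp ℂ 2 μ := fun n => (haℒp n).toLp (a n) with hu
    have hu_norm : ∀ n, ‖u n‖ ≤ 1 := by
      intro n
      rw [hu]
      rw [Lp.norm_toLp]
      have hb := eLpNorm_le_of_ae_bound (p := 2) (μ := μ)
        (Filter.Eventually.of_forall (habd n))
      simp only [measure_univ, ENNReal.one_rpow, one_mul, ENNReal.ofReal_one] at hb
      have := ENNReal.toReal_mono (by norm_num) hb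
      simpa using this
    have goal_eq : ∀ N : ℕ, (eLpNorm (fun x => (N : ℝ)⁻¹ • ∑ n ∈ range N, a n x) 2 μ).toReal
        = (N : ℝ)⁻¹ * ‖(∑ n ∈ range N, u n : Lp ℂ 2 μ)‖ := by
      intro N
      have h2 : ∀ᵐ x ∂μ, ∀ n : ℕ, (u n : X → ℂ) x = a n x :=
        (MeasureTheory.ae_all_iff).2 fun n => MemLp.coeFn_toLp (haℒp n)
      have hsum : ⇑(∑ n ∈ range N, u n) =ᵐ[μ] fun x => ∑ n ∈ range N, a n x := by
        filter_upwards [Lp_coeFn_sum (range N) u, h2] with x h1 h2'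
        rw [h1]
        exact Finset.sum_congr rfl fun n _ => h2' n
      calc (eLpNorm (fun x => (N : ℝ)⁻¹ • ∑ n ∈ range N, a n x) 2 μ).toReal
          = (eLpNorm (⇑((N : ℝ)⁻¹ • ∑ n ∈ range N, u n : Lp ℂ 2 μ)) 2 μ).toReal := by
            apply congrArg
            apply eLpNorm_congr_ae
            filter_upwards [Lp.coeFn_smul ((N : ℝ)⁻¹) (∑ n ∈ range N, u n), hsum] with x hx1 hx2
            rw [hx1, Pi.smul_apply, hx2]
        _ = ‖((N : ℝ)⁻¹ • ∑ n ∈ range N, u n : Lp ℂ 2 μ)‖ := (Lp.norm_def _).symm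
        _ = (N : ℝ)⁻¹ * ‖(∑ n ∈ range N, u n : Lp ℂ 2 μ)‖ := by
            rw [norm_smul, norm_inv, Real.norm_natCast]
    -- reduce to the Hilbert-space statement
    have main : Tendsto (fun N : ℕ => (N : ℝ)⁻¹ * ‖(∑ n ∈ range N, u n : Lp ℂ 2 μ)‖)
        atTop (nhds 0) := by
      apply vdc u hu_norm
      intro d hd
      -- the difference polynomial
      obtain ⟨hDdeg0, hDirr0⟩ := delta_poly q (q.natDegree - 1) (by omega) hirr d hd
      set D : ℝ[X] := q - Polynomial.taylor (d : ℝ) q with hDdef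
      have hDdeg : m + 1 ≤ D.natDegree := by
        rw [hDdef, ← neg_sub, natDegree_neg, hDdeg0]
        omega
      have hDirr : Irrational D.leadingCoeff := by
        rw [hDdef, ← neg_sub, leadingCoeff_neg]
        exact hDirr0.neg
      -- the composite bounded functions
      set g : Fin (m + 1) → X → ℂ :=
        fun i x => (starRingEnd ℂ) (f i ((⇑(S i))^[d] x)) * f i x with hg
      have hgmeas : ∀ i, Measurable (g i) := by
        intro i
        exact ((Complex.continuous_conj.measurable).comp ((hmeas i).comp (hSm i d))).mul (hmeas i)
      have hgbdd : ∀ i x, ‖g i x‖ ≤ 1 := by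
        intro i x
        rw [hg]
        simp only [norm_mul, RCLike.norm_conj]
        calc ‖f i ((⇑(S i))^[d] x)‖ * ‖f i x‖ ≤ 1 * 1 :=
              mul_le_mul (hbdd i _) (hbdd i _) (norm_nonneg _) zero_le_one
          _ = 1 := one_mul 1
      -- pointwise correlation formula
      have hptwise : ∀ n x, (starRingEnd ℂ) (a (n + d) x) * a n x
          = (∏ i, g i ((⇑(S i))^[n] x)) *
              Complex.exp (2 * Real.pi * Complex.I * (D.eval (n : ℝ) : ℝ)) := by
        intro n x
        rw [ha]
        simp only [map_mul, map_prod]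
        have hexp : (starRingEnd ℂ)
              (Complex.exp (2 * Real.pi * Complex.I * (q.eval ((n + d : ℕ) : ℝ) : ℝ))) *
              Complex.exp (2 * Real.pi * Complex.I * (q.eval (n : ℝ) : ℝ))
            = Complex.exp (2 * Real.pi * Complex.I * (D.eval (n : ℝ) : ℝ)) := by
          rw [← Complex.exp_conj, ← Complex.exp_add]
          congr 1
          have hDeval : D.eval (n : ℝ) = q.eval (n : ℝ) - q.eval ((n : ℝ) + d) := by
            rw [hDdef, Polynomial.eval_sub, Polynomial.taylor_eval]
          have hcast : ((n + d : ℕ) : ℝ) = (n : ℝ) + d := by push_cast; ring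
          rw [hcast, hDeval]
          simp only [map_mul, Complex.conj_I, Complex.conj_ofReal, map_ofNat]
          push_cast
          ring
        have hprod : (∏ i, (starRingEnd ℂ) (f i ((⇑(S i))^[n + d] x))) *
              (∏ i, f i ((⇑(S i))^[n] x))
            = ∏ i, g i ((⇑(S i))^[n] x) := by
          rw [← Finset.prod_mul_distrib]
          refine Finset.prod_congr rfl fun i _ => ?_
          rw [hg]
          have : (⇑(S i))^[n + d] x = (⇑(S i))^[d] ((⇑(S i))^[n] x) := by
            rw [Nat.add_comm, Function.iterate_add_apply]
          rw [this]
        calc ((∏ i, (starRingEnd ℂ) (f i ((⇑(S i))^[n + d] x))) *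
              (starRingEnd ℂ) (Complex.exp (2 * Real.pi * Complex.I *
                (q.eval ((n + d : ℕ) : ℝ) : ℝ)))) *
              ((∏ i, f i ((⇑(S i))^[n] x)) *
                Complex.exp (2 * Real.pi * Complex.I * (q.eval (n : ℝ) : ℝ)))
            = ((∏ i, (starRingEnd ℂ) (f i ((⇑(S i))^[n + d] x))) *
                (∏ i, f i ((⇑(S i))^[n] x))) *
              ((starRingEnd ℂ) (Complex.exp (2 * Real.pi * Complex.I *
                (q.eval ((n + d : ℕ) : ℝ) : ℝ))) *
                Complex.exp (2 * Real.pi * Complex.I * (q.eval (n : ℝ) : ℝ))) := by ring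
          _ = (∏ i, g i ((⇑(S i))^[n] x)) *
              Complex.exp (2 * Real.pi * Complex.I * (D.eval (n : ℝ) : ℝ)) := by
            rw [hprod, hexp]
      -- the transformed system
      set L : Fin (m + 1) := Fin.last m with hL
      set σ : X ≃ᵐ X := (S L).symm with hσdef
      have hσ : MeasurePreserving σ μ μ := (hS L).symm (S L)
      set T : Fin m → X ≃ᵐ X := fun j => σ.trans (S j.castSucc) with hT
      have hTcoe : ∀ j, ⇑(T j) = ⇑(S j.castSucc) ∘ ⇑σ := fun j => rfl
      have hcomm_symm : ∀ i : Fin (m + 1), ∀ x, (S i) (σ x) = σ ((S i) x) := by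
        intro i x
        apply (S L).injective
        have h1 : (S L) ((S i) (σ x)) = (S i) ((S L) (σ x)) := congrFun (hcomm L i) (σ x)
        rw [h1]
        have h2 : (S L) (σ x) = x := (S L).apply_symm_apply x
        have h3 : (S L) (σ ((S i) x)) = (S i) x := (S L).apply_symm_apply _
        rw [h2, h3]
      have hTiter : ∀ (j : Fin m) (n : ℕ) (x : X),
          (⇑(T j))^[n] x = (⇑(S j.castSucc))^[n] ((⇑σ)^[n] x) := by
        intro j n x
        have hcommute : Function.Commute ⇑(S j.castSucc) ⇑σ := by
          intro y
          exact (hcomm_symm j.castSucc y).symm ▸ rfl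
        rw [hTcoe j] at *
        have := Function.Commute.comp_iterate hcommute n
        calc (⇑(S j.castSucc) ∘ ⇑σ)^[n] x
            = ((⇑(S j.castSucc))^[n] ∘ (⇑σ)^[n]) x := by rw [this]
          _ = (⇑(S j.castSucc))^[n] ((⇑σ)^[n] x) := rfl
      have hLiter : ∀ (n : ℕ) (x : X), (⇑(S L))^[n] ((⇑σ)^[n] x) = x := by
        intro n x
        have hli : Function.LeftInverse ⇑(S L) ⇑σ := fun y => (S L).apply_symm_apply y
        exact hli.iterate n x
      have hTmp : ∀ j, MeasurePreserving (T j) μ μ := by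
        intro j
        rw [show ⇑(T j) = ⇑(S j.castSucc) ∘ ⇑σ from rfl] at *
        exact (hS j.castSucc).comp hσ
      have hTcomm : ∀ j k, ⇑(T j) ∘ ⇑(T k) = ⇑(T k) ∘ ⇑(T j) := by
        intro j k
        funext x
        show (S j.castSucc) (σ ((S k.castSucc) (σ x))) = (S k.castSucc) (σ ((S j.castSucc) (σ x)))
        have h4 : (S j.castSucc) ((S k.castSucc) (σ (σ x)))
            = (S k.castSucc) ((S j.castSucc) (σ (σ x))) := by
          have := congrFun (hcomm j.castSucc k.castSucc) (σ (σ x))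
          exact this
        calc (S j.castSucc) (σ ((S k.castSucc) ((σ x))))
            = (S j.castSucc) ((S k.castSucc) (σ (σ x))) := by rw [hcomm_symm k.castSucc (σ x)]
          _ = (S k.castSucc) ((S j.castSucc) (σ (σ x))) := h4
          _ = (S k.castSucc) (σ ((S j.castSucc) (σ x))) := by rw [← hcomm_symm j.castSucc (σ x)]
      -- inner products as integrals
      have hinner : ∀ n, (⟪u (n + d), u n⟫_ℂ)
          = ∫ x, (starRingEnd ℂ) (a (n + d) x) * a n x ∂μ := by
        intro n
        rw [hu, MeasureTheory.L2.inner_def]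
        apply integral_congr_ae
        filter_upwards [MemLp.coeFn_toLp (haℒp (n + d)), MemLp.coeFn_toLp (haℒp n)]
          with x h1 h2
        rw [RCLike.inner_apply, h1, h2]
        exact mul_comm _ _
      -- the reduced sequence
      set P : ℕ → X → ℂ := fun n x => ∏ j : Fin m, g j.castSucc ((⇑(T j))^[n] x) with hP
      set b : ℕ → X → ℂ := fun n x => P n x *
        Complex.exp (2 * Real.pi * Complex.I * (D.eval (n : ℝ) : ℝ)) with hb
      have hPmeas : ∀ n, Measurable (P n) := fun n =>
        Finset.measurable_prod _ fun j _ => (hgmeas j.castSucc).comp ((T j).measurable.iterate n)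
      have hPbdd : ∀ n x, ‖P n x‖ ≤ 1 := by
        intro n x
        rw [hP]
        simp only [norm_prod]
        exact Finset.prod_le_one (fun j _ => norm_nonneg _) fun j _ => hgbdd _ _
      have hbmeas : ∀ n, Measurable (b n) := fun n => (hPmeas n).mul_const _
      have hbbdd : ∀ n x, ‖b n x‖ ≤ 1 := by
        intro n x
        rw [hb]
        simp only [norm_mul, exp_poly_norm_one, mul_one]
        exact hPbdd n x
      -- key integral identity
      have hint : ∀ n, (⟪u (n + d), u n⟫_ℂ) = ∫ x, g L x * b n x ∂μ := by
        intro n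
        rw [hinner n]
        rw [integral_congr_ae (Filter.Eventually.of_forall fun x => hptwise n x)]
        have hmp : MeasurePreserving ((⇑σ)^[n]) μ μ := hσ.iterate n
        have hmeasF : Measurable (fun x => (∏ i, g i ((⇑(S i))^[n] x)) *
            Complex.exp (2 * Real.pi * Complex.I * (D.eval (n : ℝ) : ℝ))) :=
          (Finset.measurable_prod _ fun i _ => (hgmeas i).comp (hSm i n)).mul_const _
        calc ∫ x, (∏ i, g i ((⇑(S i))^[n] x)) *
              Complex.exp (2 * Real.pi * Complex.I * (D.eval (n : ℝ) : ℝ)) ∂μ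
            = ∫ x, (∏ i, g i ((⇑(S i))^[n] ((⇑σ)^[n] x))) *
              Complex.exp (2 * Real.pi * Complex.I * (D.eval (n : ℝ) : ℝ)) ∂μ := by
              conv_lhs => rw [← hmp.map_eq]
              rw [MeasureTheory.integral_map hmp.measurable.aemeasurable
                (by rw [hmp.map_eq]; exact hmeasF.aestronglyMeasurable)]
          _ = ∫ x, g L x * b n x ∂μ := by
              apply integral_congr_ae
              apply Filter.Eventually.of_forall
              intro x
              show (∏ i, g i ((⇑(S i))^[n] ((⇑σ)^[n] x))) *
                  Complex.exp (2 * Real.pi * Complex.I * (D.eval (n : ℝ) : ℝ))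
                = g L x * b n x
              rw [Fin.prod_univ_castSucc]
              have hprod_eq : (∏ j : Fin m,
                  g (Fin.castSucc j) ((⇑(S (Fin.castSucc j)))^[n] ((⇑σ)^[n] x))) = P n x := by
                rw [hP]
                refine Finset.prod_congr rfl fun j _ => ?_
                rw [hTiter j n x]
              have hlast_eq : (⇑(S (Fin.last m)))^[n] ((⇑σ)^[n] x) = x := hLiter n x
              rw [hprod_eq, hlast_eq, hb]
              ring
      -- sum identity
      have hint_sum : ∀ N : ℕ, ∑ n ∈ range N, (⟪u (n + d), u n⟫_ℂ)
          = ∫ x, g L x * ∑ n ∈ range N, b n x ∂μ := by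
        intro N
        rw [Finset.sum_congr rfl fun n _ => hint n, ← integral_finset_sum]
        · apply integral_congr_ae
          apply Filter.Eventually.of_forall
          intro x
          show ∑ n ∈ range N, g L x * b n x = g L x * ∑ n ∈ range N, b n x
          rw [Finset.mul_sum]
        · intro n _
          refine memLp_one_iff_integrable.1 (MemLp.of_bound
            (((hgmeas L).mul (hbmeas n)).aestronglyMeasurable) 1
            (Filter.Eventually.of_forall fun x => ?_))
          rw [norm_mul]
          calc ‖g L x‖ * ‖b n x‖ ≤ 1 * 1 :=
              mul_le_mul (hgbdd L x) (hbbdd n x) (norm_nonneg _) zero_le_one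
            _ = 1 := one_mul 1
      -- MemLp facts
      have hBmeas : ∀ N : ℕ, Measurable (fun x => (N : ℝ)⁻¹ • ∑ n ∈ range N, b n x) :=
        fun N => (Finset.measurable_sum _ fun n _ => hbmeas n).const_smul ((N : ℝ)⁻¹)
      have hBbdd : ∀ (N : ℕ) (x : X), ‖(N : ℝ)⁻¹ • ∑ n ∈ range N, b n x‖ ≤ 1 := by
        intro N x
        rcases Nat.eq_zero_or_pos N with h0 | hpos
        · subst h0; simp
        · have hNpos : (0:ℝ) < N := by exact_mod_cast hpos
          rw [norm_smul, norm_inv, Real.norm_natCast]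
          calc (N:ℝ)⁻¹ * ‖∑ n ∈ range N, b n x‖
              ≤ (N:ℝ)⁻¹ * ∑ n ∈ range N, ‖b n x‖ := by
                gcongr
                exact norm_sum_le _ _
            _ ≤ (N:ℝ)⁻¹ * ∑ n ∈ range N, 1 := by
                gcongr with n hn
                exact hbbdd n x
            _ = 1 := by
                rw [Finset.sum_const, card_range, nsmul_eq_mul, mul_one]
                field_simp
      have hBmem : ∀ N : ℕ, MemLp (fun x => (N : ℝ)⁻¹ • ∑ n ∈ range N, b n x) 2 μ :=
        fun N => MemLp.of_bound (hBmeas N).aestronglyMeasurable 1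
          (Filter.Eventually.of_forall (hBbdd N))
      have hGmem : MemLp (fun x => (starRingEnd ℂ) (g L x)) 2 μ :=
        MemLp.of_bound ((Complex.continuous_conj.measurable).comp
          (hgmeas L)).aestronglyMeasurable 1
          (Filter.Eventually.of_forall fun x => by
            rw [RCLike.norm_conj]; exact hgbdd L x)
      set G : Lp ℂ 2 μ := hGmem.toLp _ with hG
      -- correlation bound via Cauchy-Schwarz
      have hcor_bound : ∀ N : ℕ, (N : ℝ)⁻¹ * ‖∑ n ∈ range N, (⟪u (n + d), u n⟫_ℂ)‖
          ≤ ‖G‖ * (eLpNorm (fun x => (N : ℝ)⁻¹ • ∑ n ∈ range N, b n x) 2 μ).toReal := by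
        intro N
        have h1 : ∫ x, g L x * ((N : ℝ)⁻¹ • ∑ n ∈ range N, b n x) ∂μ
            = (N : ℝ)⁻¹ • ∫ x, g L x * (∑ n ∈ range N, b n x) ∂μ := by
          rw [← integral_smul]
          apply integral_congr_ae
          apply Filter.Eventually.of_forall
          intro x
          show g L x * ((N : ℝ)⁻¹ • ∑ n ∈ range N, b n x)
              = (N : ℝ)⁻¹ • (g L x * ∑ n ∈ range N, b n x)
          rw [mul_smul_comm]
        have h2 : (N : ℝ)⁻¹ * ‖∑ n ∈ range N, (⟪u (n + d), u n⟫_ℂ)‖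
            = ‖∫ x, g L x * ((N : ℝ)⁻¹ • ∑ n ∈ range N, b n x) ∂μ‖ := by
          rw [h1, hint_sum N, norm_smul, norm_inv, Real.norm_natCast]
        have h3 : ∫ x, g L x * ((N : ℝ)⁻¹ • ∑ n ∈ range N, b n x) ∂μ
            = (⟪G, (hBmem N).toLp _⟫_ℂ) := by
          rw [hG, MeasureTheory.L2.inner_def]
          apply integral_congr_ae
          filter_upwards [MemLp.coeFn_toLp hGmem, MemLp.coeFn_toLp (hBmem N)] with x hx1 hx2
          rw [RCLike.inner_apply, hx1, hx2, Complex.conj_conj]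
          exact mul_comm _ _
        rw [h2, h3]
        calc ‖(⟪G, (hBmem N).toLp _⟫_ℂ)‖ ≤ ‖G‖ * ‖(hBmem N).toLp _‖ := norm_inner_le_norm _ _
          _ = ‖G‖ * (eLpNorm (fun x => (N : ℝ)⁻¹ • ∑ n ∈ range N, b n x) 2 μ).toReal :=
              congrArg (fun t => ‖G‖ * t) (Lp.norm_toLp _ (hBmem N))
      -- apply the induction hypothesis
      have ihapp := ih T hTmp hTcomm D hDdeg hDirr (fun j => g j.castSucc)
        (fun j => hgmeas j.castSucc) (fun j x => hgbdd j.castSucc x)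
      have hfinal : Tendsto (fun N : ℕ =>
          ‖G‖ * (eLpNorm (fun x => (N : ℝ)⁻¹ • ∑ n ∈ range N, b n x) 2 μ).toReal)
          atTop (nhds 0) := by
        have h := ihapp.const_mul ‖G‖
        rw [mul_zero] at h
        exact h
      exact squeeze_zero (fun N => by positivity) hcor_bound hfinal
    rw [show (fun N : ℕ => (eLpNorm (fun x => (N : ℝ)⁻¹ • ∑ n ∈ range N,
        ((∏ i, f i ((⇑(S i))^[n] x)) *
          Complex.exp (2 * Real.pi * Complex.I * (q.eval (n : ℝ) : ℝ)))) 2 μ).toReal)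
      = (fun N : ℕ => (N : ℝ)⁻¹ * ‖(∑ n ∈ range N, u n : Lp ℂ 2 μ)‖) from funext goal_eq]
    exact main

/-- Norm-convergence consequence of Proposition `PropCopiedFromFLW`: for commuting
invertible measure preserving `S₁, …, S_{k−1}`, bounded functions `f₁, …, f_{k−1}`, and a
real polynomial `p` of degree at least `k` with irrational leading coefficient, the `L²`
norms of the averages of `S₁ⁿf₁ ⋯ S_{k−1}ⁿf_{k−1} e^{2πip(n)}` tend to `0`. -/
theorem twisted_product_averages_tendsto_zero {X : Type*} [MeasurableSpace X]
    (μ : Measure X) [IsProbabilityMeasure μ] (k : ℕ) (hk : 2 ≤ k)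
    (S : Fin (k - 1) → X ≃ᵐ X) (hS : ∀ i, MeasurePreserving (S i) μ μ)
    (hcomm : ∀ i j, ⇑(S i) ∘ ⇑(S j) = ⇑(S j) ∘ ⇑(S i))
    (p : Polynomial ℝ) (hdeg : k ≤ p.natDegree) (hirr : Irrational p.leadingCoeff)
    (f : Fin (k - 1) → X → ℂ) (hmeas : ∀ i, Measurable (f i))
    (hbdd : ∀ i, ∃ C : ℝ, ∀ x, ‖f i x‖ ≤ C) :
    Tendsto (fun N : ℕ =>
        (eLpNorm (fun x =>
            (N : ℝ)⁻¹ • ∑ n ∈ Finset.range N,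
              (∏ i, f i ((⇑(S i))^[n + 1] x)) *
                Complex.exp (2 * Real.pi * Complex.I * p.eval ((n + 1 : ℕ) : ℝ))) 2 μ).toReal)
      atTop (nhds 0) := by
  classical
  choose C hC using hbdd
  set D : Fin (k - 1) → ℝ := fun i => max (C i) 1 with hD
  have hD1 : ∀ i, 1 ≤ D i := fun i => le_max_right _ _
  have hDpos : ∀ i, 0 < D i := fun i => lt_of_lt_of_le one_pos (hD1 i)
  set f' : Fin (k - 1) → X → ℂ := fun i x => ((D i : ℝ) : ℂ)⁻¹ * f i ((S i) x) with hf'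
  have hf'meas : ∀ i, Measurable (f' i) := fun i =>
    ((hmeas i).comp (S i).measurable).const_mul _
  have hf'bdd : ∀ i x, ‖f' i x‖ ≤ 1 := by
    intro i x
    rw [hf', ]
    simp only [norm_mul, norm_inv]
    have h1 : ‖((D i : ℝ) : ℂ)‖ = D i := by
      rw [Complex.norm_real, Real.norm_eq_abs, abs_of_pos (hDpos i)]
    rw [h1]
    rw [inv_mul_le_iff₀ (hDpos i), mul_one]
    calc ‖f i ((S i) x)‖ ≤ C i := hC i _
      _ ≤ D i := le_max_left _ _
  set q : Polynomial ℝ := Polynomial.taylor (1 : ℝ) p with hq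
  have hqdeg : q.natDegree = p.natDegree := Polynomial.natDegree_taylor p 1
  have hqirr : Irrational q.leadingCoeff := by
    have : q.leadingCoeff = p.leadingCoeff := by
      rw [Polynomial.leadingCoeff, hqdeg, hq, taylor_coeff_top]
      rfl
    rwa [this]
  have hdeg' : (k - 1) + 1 ≤ q.natDegree := by rw [hqdeg]; omega
  have key := normAvg μ (k - 1) S hS hcomm q hdeg' hqirr f' hf'meas hf'bdd
  set Dc : ℂ := ∏ i, ((D i : ℝ) : ℂ) with hDc
  have hptwise : ∀ (N : ℕ) (x : X),
      ((N : ℝ)⁻¹ • ∑ n ∈ Finset.range N,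
        (∏ i, f i ((⇑(S i))^[n + 1] x)) *
          Complex.exp (2 * Real.pi * Complex.I * p.eval ((n + 1 : ℕ) : ℝ)))
      = Dc * ((N : ℝ)⁻¹ • ∑ n ∈ Finset.range N,
          (∏ i, f' i ((⇑(S i))^[n] x)) *
            Complex.exp (2 * Real.pi * Complex.I * (q.eval (n : ℝ) : ℝ))) := by
    intro N x
    have hterm : ∀ n : ℕ,
        (∏ i, f i ((⇑(S i))^[n + 1] x)) *
          Complex.exp (2 * Real.pi * Complex.I * p.eval ((n + 1 : ℕ) : ℝ))
        = Dc * ((∏ i, f' i ((⇑(S i))^[n] x)) *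
            Complex.exp (2 * Real.pi * Complex.I * (q.eval (n : ℝ) : ℝ))) := by
      intro n
      have hexp : (Complex.exp (2 * Real.pi * Complex.I * p.eval ((n + 1 : ℕ) : ℝ)) : ℂ)
          = Complex.exp (2 * Real.pi * Complex.I * (q.eval (n : ℝ) : ℝ)) := by
        congr 1
        have : q.eval (n : ℝ) = p.eval ((n : ℝ) + 1) := Polynomial.taylor_eval 1 p (n : ℝ)
        rw [this]
        push_cast
        ring
      have hfac : ∀ i, f i ((⇑(S i))^[n + 1] x) = ((D i : ℝ) : ℂ) * f' i ((⇑(S i))^[n] x) := by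
        intro i
        rw [hf']
        have hDne : ((D i : ℝ) : ℂ) ≠ 0 := by
          simp only [ne_eq, Complex.ofReal_eq_zero]
          exact (hDpos i).ne'
        rw [Function.iterate_succ_apply' (⇑(S i)) n x]
        field_simp
      rw [Finset.prod_congr rfl fun i _ => hfac i, Finset.prod_mul_distrib, hexp, hDc]
      ring
    rw [Finset.sum_congr rfl fun n _ => hterm n, ← Finset.mul_sum, mul_smul_comm]
  have heq : ∀ N : ℕ, (eLpNorm (fun x =>
        (N : ℝ)⁻¹ • ∑ n ∈ Finset.range N,
          (∏ i, f i ((⇑(S i))^[n + 1] x)) *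
            Complex.exp (2 * Real.pi * Complex.I * p.eval ((n + 1 : ℕ) : ℝ))) 2 μ).toReal
      = ‖Dc‖ * (eLpNorm (fun x =>
          (N : ℝ)⁻¹ • ∑ n ∈ Finset.range N,
            (∏ i, f' i ((⇑(S i))^[n] x)) *
              Complex.exp (2 * Real.pi * Complex.I * (q.eval (n : ℝ) : ℝ))) 2 μ).toReal := by
    intro N
    have h1 : (fun x => (N : ℝ)⁻¹ • ∑ n ∈ Finset.range N,
          (∏ i, f i ((⇑(S i))^[n + 1] x)) *
            Complex.exp (2 * Real.pi * Complex.I * p.eval ((n + 1 : ℕ) : ℝ)))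
        = Dc • (fun x => (N : ℝ)⁻¹ • ∑ n ∈ Finset.range N,
            (∏ i, f' i ((⇑(S i))^[n] x)) *
              Complex.exp (2 * Real.pi * Complex.I * (q.eval (n : ℝ) : ℝ))) := by
      funext x
      rw [Pi.smul_apply, smul_eq_mul]
      exact hptwise N x
    rw [h1, eLpNorm_const_smul]
    rw [ENNReal.toReal_mul, toReal_enorm]
  rw [show (fun N : ℕ => (eLpNorm (fun x =>
        (N : ℝ)⁻¹ • ∑ n ∈ Finset.range N,
          (∏ i, f i ((⇑(S i))^[n + 1] x)) *
            Complex.exp (2 * Real.pi * Complex.I * p.eval ((n + 1 : ℕ) : ℝ))) 2 μ).toReal)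
      = (fun N : ℕ => ‖Dc‖ * (eLpNorm (fun x =>
          (N : ℝ)⁻¹ • ∑ n ∈ Finset.range N,
            (∏ i, f' i ((⇑(S i))^[n] x)) *
              Complex.exp (2 * Real.pi * Complex.I * (q.eval (n : ℝ) : ℝ))) 2 μ).toReal)
    from funext heq]
  have := key.const_mul ‖Dc‖
  rw [mul_zero] at this
  exact this
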